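/- Let f be holomorphic on an open neighborhood of x ∈ ℂⁿ with all partial derivatives of order ≤ p vanishing at x, and let g be holomorphic on an open neighborhood of y ∈ ℂᵐ with all partial derivatives of order ≤ q vanishing at y. Then the function F(z,w) = f(z)·g(w), holomorphic near (x,y) ∈ ℂ^{n+m}, has all partial derivatives of order ≤ p + q + 1 vanishing at (x,y). -/

import Mathlib

open Metric Complex Set MeasureTheory Filter

section OneVar

variable {F : Type*} [NormedAddCommGroup F] [NormedSpace ℂ F] [CompleteSpace F]

/-- Off-center Cauchy formula for the derivative: if `φ` is ℂ-differentiable on a closed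
disc, then at any interior point `w` it has derivative given by the Cauchy integral of
`(λ - w)⁻² • φ λ` over the boundary circle. -/
lemma hasDerivAt_of_differentiableOn_closedBall
    {φ : ℂ → F} {a : ℂ} {r : ℝ} (hr : 0 < r)
    (hφ : DifferentiableOn ℂ φ (closedBall a r)) {w : ℂ} (hw : w ∈ ball a r) :
    HasDerivAt φ
      ((2 * Real.pi * I : ℂ)⁻¹ • ∮ z in C(a, r), ((z - w) ^ 2)⁻¹ • φ z) w := by
  -- notation
  set m : ℝ → ℂ := circleMap a r with hm
  obtain ⟨C, hC⟩ : ∃ C, ∀ z ∈ closedBall a r, ‖φ z‖ ≤ C :=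
    (isCompact_closedBall a r).exists_bound_of_continuousOn hφ.continuousOn
  have hmem : ∀ θ : ℝ, m θ ∈ closedBall a r := fun θ =>
    sphere_subset_closedBall (circleMap_mem_sphere a hr.le θ)
  set δ : ℝ := (r - dist w a) / 2 with hδ
  have hδ0 : 0 < δ := by
    have := mem_ball.mp hw
    simp only [hδ]
    linarith
  have hdist : dist w a < r := mem_ball.mp hw
  -- key distance estimate
  have hfar : ∀ x ∈ ball w δ, ∀ θ : ℝ, δ ≤ ‖m θ - x‖ := by
    intro x hx θ
    have h1 : dist (m θ) a = r := mem_sphere.mp (circleMap_mem_sphere a hr.le θ)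
    have h2 : dist x a < dist w a + δ :=
      lt_of_le_of_lt (dist_triangle x w a) (by
        have := mem_ball.mp hx; rw [dist_comm] at this ⊢; linarith)
    have h3 : dist w a + δ ≤ r - δ := by simp only [hδ]; linarith
    have := dist_triangle (m θ) x a
    have : r ≤ dist (m θ) x + dist x a := by rw [← h1]; exact dist_triangle _ _ _
    rw [← dist_eq_norm]
    linarith
  -- integrand and its derivative in the parameter
  set G : ℂ → ℝ → F := fun x θ => deriv m θ • ((m θ - x)⁻¹ • φ (m θ)) with hG
  set G' : ℂ → ℝ → F := fun x θ => deriv m θ • (((m θ - x) ^ 2)⁻¹ • φ (m θ)) with hG'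
  have hballδ : ball w δ ⊆ ball a r := by
    intro x hx
    have h2 : dist x a ≤ dist x w + dist w a := dist_triangle _ _ _
    have := mem_ball.mp hx
    rw [mem_ball]
    simp only [hδ] at *
    linarith
  have hcontφ : Continuous fun θ => φ (m θ) :=
    hφ.continuousOn.comp_continuous (continuous_circleMap a r) hmem
  have hne : ∀ x ∈ ball w δ, ∀ θ : ℝ, m θ - x ≠ 0 := by
    intro x hx θ
    have := hfar x hx θ
    intro h
    rw [h] at this
    simp at this
    linarith
  have hwδ : w ∈ ball w δ := mem_ball_self hδ0
  have hcontd : Continuous fun θ => deriv m θ := by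
    simp only [hm, deriv_circleMap]
    exact (continuous_circleMap 0 r).mul continuous_const
  have hcontG : ∀ x ∈ ball w δ, Continuous (G x) := by
    intro x hx
    exact hcontd.smul
      ((((continuous_circleMap a r).sub continuous_const).inv₀ (hne x hx)).smul hcontφ)
  have hcontG' : ∀ x ∈ ball w δ, Continuous (G' x) := by
    intro x hx
    exact hcontd.smul (((((continuous_circleMap a r).sub continuous_const).pow 2).inv₀
      (fun θ => pow_ne_zero 2 (hne x hx θ))).smul hcontφ)
  -- the parametric derivative theorem
  have key := intervalIntegral.hasDerivAt_integral_of_dominated_loc_of_deriv_le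
    (F := G) (F' := G') (x₀ := w) (a := 0) (b := 2 * Real.pi)
    (μ := MeasureTheory.volume) (bound := fun _ => r * ((δ ^ 2)⁻¹ * C)) (ball_mem_nhds w hδ0)
    ?meas ?int ?meas' ?bd ?bint ?diff
  case meas =>
    filter_upwards [ball_mem_nhds w hδ0] with x hx
    exact (hcontG x hx).aestronglyMeasurable
  case int => exact ((hcontG w hwδ)).intervalIntegrable _ _
  case meas' => exact (hcontG' w hwδ).aestronglyMeasurable
  case bd =>
    refine Filter.Eventually.of_forall fun θ _ x hx => ?_
    have h1 : ‖deriv m θ‖ = r := by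
      simp [hm, deriv_circleMap, norm_circleMap_zero, abs_of_pos hr]
    calc ‖G' x θ‖ = ‖deriv m θ‖ * (‖((m θ - x) ^ 2)⁻¹‖ * ‖φ (m θ)‖) := by
          simp [hG', norm_smul]
      _ ≤ r * ((δ ^ 2)⁻¹ * C) := by
          rw [h1]
          have hφb := hC _ (hmem θ)
          have hd := hfar x hx θ
          have hδ2 : (0:ℝ) < δ ^ 2 := by positivity
          have h2 : ‖((m θ - x) ^ 2)⁻¹‖ ≤ (δ ^ 2)⁻¹ := by
            rw [norm_inv, norm_pow]
            apply inv_anti₀ hδ2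
            exact pow_le_pow_left₀ hδ0.le hd 2
          have h0C : 0 ≤ C := le_trans (norm_nonneg _) (hC _ (hmem 0))
          apply mul_le_mul_of_nonneg_left _ hr.le
          exact mul_le_mul h2 hφb (norm_nonneg _) (by positivity)
  case bint => exact intervalIntegrable_const
  case diff =>
    refine Filter.Eventually.of_forall fun θ _ x hx => ?_
    have h1 : HasDerivAt (fun y : ℂ => (m θ - y)⁻¹) (((m θ - x) ^ 2)⁻¹) x := by
      have h2 : HasDerivAt (fun y : ℂ => m θ - y) (-1) x := by
        simpa using (hasDerivAt_id x).const_sub (m θ)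
      have := h2.inv (hne x hx θ)
      exact this.congr_deriv (by ring)
    exact ((h1.smul_const (φ (m θ))).const_smul (deriv m θ))
  obtain ⟨-, key⟩ := key
  -- identify the integral function with `(2πI) • φ` near `w`
  have hrep : ∀ x ∈ ball a r,
      (∫ θ in (0 : ℝ)..2 * Real.pi, G x θ) = (2 * Real.pi * I : ℂ) • φ x := by
    intro x hx
    have := hφ.circleIntegral_sub_inv_smul (w := x) hx
    rw [← this]
    rfl
  have heq : (fun x => (2 * Real.pi * I : ℂ)⁻¹ • ∫ θ in (0:ℝ)..2 * Real.pi, G x θ)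
      =ᶠ[nhds w] φ := by
    filter_upwards [isOpen_ball.mem_nhds hw] with x hx
    rw [hrep x hx, smul_smul, inv_mul_cancel₀ two_pi_I_ne_zero, one_smul]
  have final := (key.const_smul ((2 * Real.pi * I : ℂ)⁻¹) :)
  exact final.congr_of_eventuallyEq heq.symm

end OneVar

section MultiVar

variable {F : Type*} [NormedAddCommGroup F] [NormedSpace ℂ F] [CompleteSpace F]
variable {n : ℕ}

local notation "E" => (Fin n → ℂ)

/-- update as an affine function of the updated coordinate. -/
lemma update_eq_affine (z : E) (i : Fin n) (lam : ℂ) :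
    Function.update z i lam = (z - z i • (Pi.single i 1 : Fin n → ℂ)) + lam • (Pi.single i 1 : Fin n → ℂ) := by
  funext j
  by_cases h : j = i
  · subst h; simp
  · simp [Function.update, h]

lemma update_mem_closedBall {c z : E} {R : ℝ} (hz : z ∈ closedBall c R) (i : Fin n)
    {lam : ℂ} (hlam : lam ∈ closedBall (c i) R) :
    Function.update z i lam ∈ closedBall c R := by
  have hR : 0 ≤ R := le_trans dist_nonneg (mem_closedBall.mp hz)
  rw [mem_closedBall, dist_pi_le_iff hR]
  intro j
  by_cases h : j = i
  · subst h; simpa using mem_closedBall.mp hlam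
  · simp only [Function.update, h, dif_neg, if_neg]
    exact le_trans (dist_le_pi_dist z c j) (mem_closedBall.mp hz)

/-- the slice function along coordinate `i` has derivative the `i`-th partial. -/
lemma hasDerivAt_slice {s : Set E} (hs : IsOpen s) {f : E → F}
    (hf : DifferentiableOn ℂ f s) {z : E} (hz : z ∈ s) (i : Fin n) :
    HasDerivAt (fun w : ℂ => f (Function.update z i w))
      (fderiv ℂ f z (Pi.single i 1)) (z i) := by
  have hfd : HasFDerivAt f (fderiv ℂ f z) z :=
    (hf.differentiableAt (hs.mem_nhds hz)).hasFDerivAt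
  have haff : HasDerivAt (fun w : ℂ => Function.update z i w)
      ((Pi.single i 1 : Fin n → ℂ)) (z i) := by
    have h1 : HasDerivAt (fun w : ℂ => (z - z i • (Pi.single i 1 : Fin n → ℂ)) + w • (Pi.single i 1 : Fin n → ℂ))
        ((Pi.single i 1 : Fin n → ℂ)) (z i) := by
      have := (hasDerivAt_id (z i)).smul_const ((Pi.single i 1 : Fin n → ℂ))
      simpa using this.const_add (z - z i • (Pi.single i 1 : Fin n → ℂ))
    have h2 : (fun w : ℂ => Function.update z i w)
        = fun w : ℂ => (z - z i • (Pi.single i 1 : Fin n → ℂ)) + w • (Pi.single i 1 : Fin n → ℂ) := by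
      funext w; exact update_eq_affine z i w
    rw [h2]; exact h1
  have hzz : Function.update z i (z i) = z := Function.update_eq_self i z
  rw [← hzz] at hfd
  have key := hfd.comp_hasDerivAt (z i) haff
  rw [hzz] at key
  exact key

/-- Cauchy estimate for the full Fréchet derivative. -/
lemma norm_fderiv_le_of_bound {s : Set E} (hs : IsOpen s) {f : E → F}
    (hf : DifferentiableOn ℂ f s) {c : E} {R C : ℝ} (hR : 0 < R)
    (hsub : closedBall c R ⊆ s) (hC : ∀ w ∈ closedBall c R, ‖f w‖ ≤ C)
    {z : E} (hz : z ∈ ball c (R / 2)) :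
    ‖fderiv ℂ f z‖ ≤ n * (C / (R / 2)) := by
  have hR2 : 0 < R / 2 := by linarith
  have hzc : z ∈ closedBall c R := by
    rw [mem_closedBall]
    have := mem_ball.mp hz
    linarith
  have hupd : ∀ i : Fin n, ∀ w ∈ closedBall (z i) (R/2),
      Function.update z i w ∈ closedBall c R := by
    intro i w hw
    apply update_mem_closedBall hzc
    rw [mem_closedBall]
    calc dist w (c i) ≤ dist w (z i) + dist (z i) (c i) := dist_triangle _ _ _
      _ ≤ R/2 + R/2 := by
          refine add_le_add (mem_closedBall.mp hw) ?_
          exact le_trans (dist_le_pi_dist z c i) (by have := mem_ball.mp hz; linarith)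
      _ = R := by ring
  have hpart : ∀ i : Fin n, ‖fderiv ℂ f z (Pi.single i 1)‖ ≤ C / (R / 2) := by
    intro i
    set φ : ℂ → F := fun w => f (Function.update z i w) with hφ
    have hφdiff : DifferentiableOn ℂ φ (closedBall (z i) (R/2)) := by
      intro w hw
      have := hasDerivAt_slice hs hf (hsub (hupd i w hw)) i
      -- differentiability of the slice at w:
      have hfd : DifferentiableAt ℂ f (Function.update z i w) :=
        hf.differentiableAt (hs.mem_nhds (hsub (hupd i w hw)))
      have haff : Differentiable ℂ (fun v : ℂ => Function.update z i v) := by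
        intro v
        have h1 : Differentiable ℂ (fun v : ℂ => (z - z i • (Pi.single i 1 : Fin n → ℂ))
            + v • (Pi.single i 1 : Fin n → ℂ)) := by
          apply Differentiable.const_add
          exact (differentiable_id.smul_const _)
        have h2 : (fun v : ℂ => Function.update z i v)
            = fun v : ℂ => (z - z i • (Pi.single i 1 : Fin n → ℂ)) + v • (Pi.single i 1 : Fin n → ℂ) := by
          funext v; exact update_eq_affine z i v
        rw [h2]; exact h1 v
      exact (hfd.comp w (haff w)).differentiableWithinAt
    have hcl : DiffContOnCl ℂ φ (ball (z i) (R/2)) :=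
      (hφdiff.mono (by rw [closure_ball _ hR2.ne']) : DifferentiableOn ℂ φ
        (closure (ball (z i) (R/2)))).diffContOnCl
    have hbd : ∀ w ∈ sphere (z i) (R/2), ‖φ w‖ ≤ C := fun w hw =>
      hC _ (hupd i w (sphere_subset_closedBall hw))
    have := Complex.norm_deriv_le_of_forall_mem_sphere_norm_le hR2 hcl hbd
    have hder : deriv φ (z i) = fderiv ℂ f z (Pi.single i 1) :=
      (hasDerivAt_slice hs hf (hsub hzc) i).deriv
    rwa [hder] at this
  -- assemble
  have h0C : 0 ≤ C := le_trans (norm_nonneg _) (hC c (mem_closedBall_self hR.le))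
  refine ContinuousLinearMap.opNorm_le_bound _
    (mul_nonneg (Nat.cast_nonneg n) (div_nonneg h0C hR2.le)) fun v => ?_
  have hv : v = ∑ i : Fin n, v i • (Pi.single i 1 : Fin n → ℂ) := by
    funext j
    rw [Finset.sum_apply]
    simp [Pi.single_apply]
  calc ‖fderiv ℂ f z v‖ = ‖∑ i : Fin n, v i • fderiv ℂ f z (Pi.single i 1)‖ := by
        conv_lhs => rw [hv]
        rw [map_sum]
        simp
    _ ≤ ∑ i : Fin n, ‖v i • fderiv ℂ f z (Pi.single i 1)‖ := norm_sum_le _ _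
    _ ≤ ∑ _i : Fin n, ‖v‖ * (C / (R/2)) := by
        apply Finset.sum_le_sum
        intro i _
        rw [norm_smul]
        exact mul_le_mul (norm_le_pi_norm v i) (hpart i) (norm_nonneg _) (norm_nonneg _)
    _ = n * (C / (R / 2)) * ‖v‖ := by
        rw [Finset.sum_const]
        simp [Finset.card_univ]
        ring

set_option maxHeartbeats 1000000 in
/-- Core bootstrap: the Fréchet derivative of a holomorphic function on an open subset
of `ℂⁿ` is again (jointly) differentiable. -/
lemma differentiableAt_fderiv_of_differentiableOn [SecondCountableTopology F]
    {s : Set E} (hs : IsOpen s) {f : E → F}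
    (hf : DifferentiableOn ℂ f s) {c : E} (hc : c ∈ s) :
    DifferentiableAt ℂ (fderiv ℂ f) c := by
  classical
  -- choose radii
  obtain ⟨R, hR0, hsubR⟩ : ∃ R > 0, closedBall c R ⊆ s := by
    rcases Metric.isOpen_iff.mp hs c hc with ⟨t, ht0, hts⟩
    exact ⟨t / 2, by linarith, fun w hw =>
      hts (lt_of_le_of_lt (mem_closedBall.mp hw) (by linarith))⟩
  obtain ⟨C, hC⟩ : ∃ C, ∀ w ∈ closedBall c R, ‖f w‖ ≤ C :=
    (isCompact_closedBall c R).exists_bound_of_continuousOn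
      (hf.continuousOn.mono hsubR)
  have h0C : 0 ≤ C := le_trans (norm_nonneg _) (hC c (mem_closedBall_self hR0.le))
  set ρ : ℝ := R / 4 with hρ
  set ε : ℝ := R / 8 with hε
  have hρ0 : 0 < ρ := by simp only [hρ]; linarith
  have hε0 : 0 < ε := by simp only [hε]; linarith
  set M : ℝ := n * (C / (R / 2)) with hM
  have hMbd : ∀ w ∈ ball c (R/2), ‖fderiv ℂ f w‖ ≤ M :=
    fun w hw => norm_fderiv_le_of_bound hs hf hR0 hsubR hC hw
  have hM0 : 0 ≤ M :=
    le_trans (norm_nonneg _) (hMbd c (mem_ball_self (by linarith)))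
  have hρball : closedBall c ρ ⊆ ball c (R/2) := by
    intro w hw
    rw [mem_ball]
    exact lt_of_le_of_lt (mem_closedBall.mp hw) (by simp only [hρ]; linarith)
  have hρs : closedBall c ρ ⊆ s := fun w hw =>
    hsubR (closedBall_subset_closedBall (by linarith) hw)
  -- differentiability of each partial derivative
  have hpartial : ∀ i : Fin n,
      DifferentiableAt ℂ (fun z => fderiv ℂ f z (Pi.single i 1)) c := by
    intro i
    set ei : E := (Pi.single i 1 : Fin n → ℂ) with hei
    set Ui : E →L[ℂ] E :=
      ContinuousLinearMap.id ℂ E - (ContinuousLinearMap.proj i).smulRight ei with hUi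
    have hUiz : ∀ z : E, Ui z = z - z i • ei := by
      intro z; simp [hUi]
    have hupdt : ∀ (z : E) (lam : ℂ), Function.update z i lam = Ui z + lam • ei := by
      intro z lam
      rw [hUiz]
      exact update_eq_affine z i lam
    set m : ℝ → ℂ := circleMap (c i) ρ with hm
    have hmem : ∀ θ : ℝ, m θ ∈ closedBall (c i) ρ := fun θ =>
      sphere_subset_closedBall (circleMap_mem_sphere _ hρ0.le θ)
    have hmsph : ∀ θ : ℝ, dist (m θ) (c i) = ρ := fun θ =>
      mem_sphere.mp (circleMap_mem_sphere _ hρ0.le θ)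
    -- update points stay in the polydisc
    have hupdmem : ∀ z ∈ ball c ε, ∀ θ : ℝ, Ui z + m θ • ei ∈ closedBall c ρ := by
      intro z hz θ
      rw [← hupdt]
      apply update_mem_closedBall _ i (hmem θ)
      exact closedBall_subset_closedBall (by simp only [hρ, hε]; linarith)
        (ball_subset_closedBall hz)
    -- distance estimate to the pole
    have hfar : ∀ z ∈ ball c ε, ∀ θ : ℝ, ε ≤ ‖m θ - z i‖ := by
      intro z hz θ
      have h1 : dist (z i) (c i) < ε :=
        lt_of_le_of_lt (dist_le_pi_dist z c i) (mem_ball.mp hz)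
      have h2 := hmsph θ
      have h3 : ρ - ε ≤ dist (m θ) (z i) := by
        have h4 := dist_triangle (m θ) (z i) (c i)
        linarith
      rw [← dist_eq_norm]
      have : ρ - ε = ε := by simp only [hρ, hε]; ring
      linarith
    have hne : ∀ z ∈ ball c ε, ∀ θ : ℝ, m θ - z i ≠ 0 := by
      intro z hz θ h
      have := hfar z hz θ
      rw [h, norm_zero] at this
      linarith
    -- Step A: Cauchy representation of the partial derivative
    have hrep : ∀ z ∈ ball c ε, fderiv ℂ f z ei
        = (2 * Real.pi * I : ℂ)⁻¹ •
          ∮ lam in C(c i, ρ), ((lam - z i) ^ 2)⁻¹ • f (Function.update z i lam) := by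
      intro z hz
      have hzs : z ∈ s := hρs (closedBall_subset_closedBall (by simp only [hρ, hε]; linarith)
        (ball_subset_closedBall hz))
      have hφdiff : DifferentiableOn ℂ (fun w : ℂ => f (Function.update z i w))
          (closedBall (c i) ρ) := by
        intro w hw
        have hmem2 : Function.update z i w ∈ closedBall c ρ := by
          apply update_mem_closedBall _ i hw
          exact closedBall_subset_closedBall (by simp only [hρ, hε]; linarith)
            (ball_subset_closedBall hz)
        have hfd : DifferentiableAt ℂ f (Function.update z i w) :=
          hf.differentiableAt (hs.mem_nhds (hρs hmem2))
        have haff : DifferentiableAt ℂ (fun v : ℂ => Function.update z i v) w := by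
          have h2 : (fun v : ℂ => Function.update z i v)
              = fun v : ℂ => Ui z + v • ei := by
            funext v; exact hupdt z v
          rw [h2]
          exact (differentiableAt_id.smul_const ei).const_add _
        exact (hfd.comp w haff).differentiableWithinAt
      have hwball : z i ∈ ball (c i) ρ := by
        rw [mem_ball]
        exact lt_of_le_of_lt (lt_of_le_of_lt (dist_le_pi_dist z c i)
          (mem_ball.mp hz)).le (by simp only [hρ, hε]; linarith)
      have h1 := hasDerivAt_of_differentiableOn_closedBall hρ0 hφdiff hwball
      have h2 := hasDerivAt_slice hs hf hzs i
      exact h2.unique h1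
    -- Step B: differentiate under the integral
    set Hi : E → ℝ → F := fun z θ =>
      deriv m θ • (((m θ - z i) ^ 2)⁻¹ • f (Ui z + m θ • ei)) with hHi
    set Hi' : E → ℝ → (E →L[ℂ] F) := fun z θ =>
      deriv m θ • (((m θ - z i) ^ 2)⁻¹ • ((fderiv ℂ f (Ui z + m θ • ei)).comp Ui)
        + ((ContinuousLinearMap.smulRight (1 : ℂ →L[ℂ] ℂ)
            (2 * ((m θ - z i) ^ 3)⁻¹)).comp
            (ContinuousLinearMap.proj i : E →L[ℂ] ℂ)).smulRight
          (f (Ui z + m θ • ei))) with hHi'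
    have hcballε : c ∈ ball c ε := mem_ball_self hε0
    have hdk : ∀ κ : ℂ, (ContinuousLinearMap.smulRight (1 : ℂ →L[ℂ] ℂ) κ).comp
        (ContinuousLinearMap.proj i : E →L[ℂ] ℂ)
        = κ • (ContinuousLinearMap.proj i : E →L[ℂ] ℂ) := by
      intro κ
      ext v
      simp [mul_comm]
    have hcontd : Continuous fun θ => deriv m θ := by
      simp only [hm, deriv_circleMap]
      exact (continuous_circleMap 0 ρ).mul continuous_const
    have hpathcont : ∀ z : E, Continuous fun θ => Ui z + m θ • ei := by
      intro z
      exact continuous_const.add ((continuous_circleMap _ _).smul continuous_const)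
    have hfcont : ∀ z ∈ ball c ε, Continuous fun θ => f (Ui z + m θ • ei) := by
      intro z hz
      exact (hf.continuousOn.mono hρs).comp_continuous (hpathcont z)
        (fun θ => hupdmem z hz θ)
    have hkcont : ∀ z ∈ ball c ε, Continuous fun θ => ((m θ - z i) ^ 2)⁻¹ := by
      intro z hz
      exact (((continuous_circleMap _ _).sub continuous_const).pow 2).inv₀
        (fun θ => pow_ne_zero 2 (hne z hz θ))
    have hHicont : ∀ z ∈ ball c ε, Continuous (Hi z) := by
      intro z hz
      exact hcontd.smul ((hkcont z hz).smul (hfcont z hz))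
    -- bound for the derivative of the integrand
    set b : ℝ := ρ * ((ε ^ 2)⁻¹ * (M * ‖Ui‖) + 2 * (ε ^ 3)⁻¹ * C) with hb
    have key := intervalIntegral.hasFDerivAt_integral_of_dominated_of_fderiv_le
      (F := Hi) (F' := Hi') (x₀ := c) (a := 0) (b := 2 * Real.pi)
      (μ := MeasureTheory.volume) (bound := fun _ => b) (𝕜 := ℂ) (ball_mem_nhds c hε0)
      ?meas ?int ?meas' ?bd ?bint ?diff
    case meas =>
      filter_upwards [isOpen_ball.mem_nhds hcballε] with z hz
      exact (hHicont z hz).aestronglyMeasurable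
    case int => exact (hHicont c hcballε).intervalIntegrable _ _
    case meas' =>
      apply StronglyMeasurable.aestronglyMeasurable
      have sm1 : StronglyMeasurable fun θ => fderiv ℂ f (Ui c + m θ • ei) :=
        ((measurable_fderiv ℂ f).comp (hpathcont c).measurable).stronglyMeasurable
      have sm2 : StronglyMeasurable fun θ => (fderiv ℂ f (Ui c + m θ • ei)).comp Ui := by
        have hcomp : Continuous fun T : E →L[ℂ] F => T.comp Ui :=
          ((ContinuousLinearMap.compL ℂ E E F).flip Ui).continuous
        exact hcomp.comp_stronglyMeasurable sm1
      have sm3 : StronglyMeasurable fun θ =>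
          ((m θ - c i) ^ 2)⁻¹ • ((fderiv ℂ f (Ui c + m θ • ei)).comp Ui) :=
        (hkcont c hcballε).stronglyMeasurable.smul sm2
      have hκcont : Continuous fun θ => (2 * ((m θ - c i) ^ 3)⁻¹ : ℂ) :=
        continuous_const.mul ((((continuous_circleMap _ _).sub
          continuous_const).pow 3).inv₀ (fun θ => pow_ne_zero 3 (hne c hcballε θ)))
      have sm4 : Continuous fun θ =>
          ((ContinuousLinearMap.smulRight (1 : ℂ →L[ℂ] ℂ)
            (2 * ((m θ - c i) ^ 3)⁻¹)).comp
            (ContinuousLinearMap.proj i : E →L[ℂ] ℂ)).smulRight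
          (f (Ui c + m θ • ei)) := by
        simp only [hdk]
        have h5 : Continuous fun θ =>
            ((2 * ((m θ - c i) ^ 3)⁻¹ : ℂ) • (ContinuousLinearMap.proj i : E →L[ℂ] ℂ),
              f (Ui c + m θ • ei)) :=
          (hκcont.smul continuous_const).prodMk (hfcont c hcballε)
        exact ((ContinuousLinearMap.smulRightL ℂ E F).continuous₂).comp h5
      exact (hcontd.stronglyMeasurable.smul (sm3.add sm4.stronglyMeasurable))
    case bd =>
      refine Filter.Eventually.of_forall fun θ _ z hz => ?_
      have hdm : ‖deriv m θ‖ = ρ := by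
        simp [hm, deriv_circleMap, norm_circleMap_zero, abs_of_pos hρ0]
      have hfarz := hfar z hz θ
      have hptmem : Ui z + m θ • ei ∈ closedBall c ρ := hupdmem z hz θ
      have hfb : ‖f (Ui z + m θ • ei)‖ ≤ C :=
        hC _ (closedBall_subset_closedBall (by simp only [hρ]; linarith) hptmem)
      have hMb : ‖fderiv ℂ f (Ui z + m θ • ei)‖ ≤ M := hMbd _ (hρball hptmem)
      have hε2 : (0:ℝ) < ε ^ 2 := by positivity
      have hε3 : (0:ℝ) < ε ^ 3 := by positivity
      have hk2 : ‖(((m θ - z i) ^ 2)⁻¹ : ℂ)‖ ≤ (ε ^ 2)⁻¹ := by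
        rw [norm_inv, norm_pow]
        exact inv_anti₀ hε2 (pow_le_pow_left₀ hε0.le hfarz 2)
      have hk3 : ‖(2 * ((m θ - z i) ^ 3)⁻¹ : ℂ)‖ ≤ 2 * (ε ^ 3)⁻¹ := by
        rw [norm_mul, norm_inv, norm_pow]
        have : ‖(2:ℂ)‖ = 2 := by norm_num
        rw [this]
        exact mul_le_mul_of_nonneg_left
          (inv_anti₀ hε3 (pow_le_pow_left₀ hε0.le hfarz 3)) (by norm_num)
      have ht1 : ‖((m θ - z i) ^ 2)⁻¹ • ((fderiv ℂ f (Ui z + m θ • ei)).comp Ui)‖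
          ≤ (ε ^ 2)⁻¹ * (M * ‖Ui‖) := by
        rw [norm_smul (((m θ - z i) ^ 2)⁻¹ : ℂ)
          ((fderiv ℂ f (Ui z + m θ • ei)).comp Ui)]
        refine mul_le_mul hk2 ?_ (norm_nonneg _) (inv_nonneg.mpr hε2.le)
        exact le_trans (ContinuousLinearMap.opNorm_comp_le _ _)
          (mul_le_mul_of_nonneg_right hMb (norm_nonneg _))
      have hproj : ‖(ContinuousLinearMap.proj i : E →L[ℂ] ℂ)‖ ≤ 1 := by
        refine ContinuousLinearMap.opNorm_le_bound _ zero_le_one fun v => ?_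
        simpa using norm_le_pi_norm v i
      have ht2 : ‖((ContinuousLinearMap.smulRight (1 : ℂ →L[ℂ] ℂ)
            (2 * ((m θ - z i) ^ 3)⁻¹)).comp
            (ContinuousLinearMap.proj i : E →L[ℂ] ℂ)).smulRight
          (f (Ui z + m θ • ei))‖ ≤ 2 * (ε ^ 3)⁻¹ * C := by
        rw [hdk, ContinuousLinearMap.norm_smulRight_apply]
        have hdknorm : ‖(2 * ((m θ - z i) ^ 3)⁻¹ : ℂ) •
            (ContinuousLinearMap.proj i : E →L[ℂ] ℂ)‖ ≤ 2 * (ε ^ 3)⁻¹ := by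
          rw [norm_smul (2 * ((m θ - z i) ^ 3)⁻¹ : ℂ)
            (ContinuousLinearMap.proj i : E →L[ℂ] ℂ)]
          calc ‖(2 * ((m θ - z i) ^ 3)⁻¹ : ℂ)‖ * ‖(ContinuousLinearMap.proj i : E →L[ℂ] ℂ)‖
              ≤ (2 * (ε ^ 3)⁻¹) * 1 :=
                mul_le_mul hk3 hproj (norm_nonneg _) (by positivity)
            _ = 2 * (ε ^ 3)⁻¹ := mul_one _
        exact mul_le_mul hdknorm hfb (norm_nonneg _) (by positivity)
      calc ‖Hi' z θ‖ = ‖deriv m θ‖ * ‖((m θ - z i) ^ 2)⁻¹ •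
              ((fderiv ℂ f (Ui z + m θ • ei)).comp Ui)
            + ((ContinuousLinearMap.smulRight (1 : ℂ →L[ℂ] ℂ)
                (2 * ((m θ - z i) ^ 3)⁻¹)).comp
                (ContinuousLinearMap.proj i : E →L[ℂ] ℂ)).smulRight
              (f (Ui z + m θ • ei))‖ := by
            simp only [hHi']
            exact norm_smul (deriv m θ)
              (((m θ - z i) ^ 2)⁻¹ • ((fderiv ℂ f (Ui z + m θ • ei)).comp Ui)
                + ((ContinuousLinearMap.smulRight (1 : ℂ →L[ℂ] ℂ)
                    (2 * ((m θ - z i) ^ 3)⁻¹)).comp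
                    (ContinuousLinearMap.proj i : E →L[ℂ] ℂ)).smulRight
                  (f (Ui z + m θ • ei)))
        _ ≤ ρ * ((ε ^ 2)⁻¹ * (M * ‖Ui‖) + 2 * (ε ^ 3)⁻¹ * C) := by
            rw [hdm]
            refine mul_le_mul_of_nonneg_left ?_ hρ0.le
            exact le_trans (norm_add_le _ _) (add_le_add ht1 ht2)
    case bint => exact intervalIntegrable_const
    case diff =>
      refine Filter.Eventually.of_forall fun θ _ z hz => ?_
      have hptmem : Ui z + m θ • ei ∈ closedBall c ρ := hupdmem z hz θ
      have hfd : HasFDerivAt f (fderiv ℂ f (Ui z + m θ • ei)) (Ui z + m θ • ei) :=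
        (hf.differentiableAt (hs.mem_nhds (hρs hptmem))).hasFDerivAt
      have haff : HasFDerivAt (fun z : E => Ui z + m θ • ei) (Ui : E →L[ℂ] E) z :=
        Ui.hasFDerivAt.add_const _
      have hv : HasFDerivAt (fun z : E => f (Ui z + m θ • ei))
          ((fderiv ℂ f (Ui z + m θ • ei)).comp Ui) z := hfd.comp z haff
      have hg1 : HasDerivAt (fun w : ℂ => ((m θ - w) ^ 2)⁻¹)
          (2 * ((m θ - z i) ^ 3)⁻¹) (z i) := by
        have h1 : HasDerivAt (fun w : ℂ => m θ - w) (-1) (z i) := by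
          simpa using (hasDerivAt_id (z i)).const_sub (m θ)
        have h2 := h1.pow 2
        have h3 := h2.inv (pow_ne_zero 2 (hne z hz θ))
        refine h3.congr_deriv ?_
        have hnz := hne z hz θ
        simp only [Pi.pow_apply]
        field_simp
        ring
      have hproj' : HasFDerivAt (fun v : E => v i)
          (ContinuousLinearMap.proj i : E →L[ℂ] ℂ) z :=
        (ContinuousLinearMap.proj i : E →L[ℂ] ℂ).hasFDerivAt
      have hk0 := HasFDerivAt.comp (𝕜 := ℂ) z hg1.hasFDerivAt hproj'
      have hk : HasFDerivAt (fun z : E => ((m θ - z i) ^ 2)⁻¹)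
          ((ContinuousLinearMap.smulRight (1 : ℂ →L[ℂ] ℂ)
            (2 * ((m θ - z i) ^ 3)⁻¹)).comp
            (ContinuousLinearMap.proj i : E →L[ℂ] ℂ)) z := hk0
      simp only [hHi, hHi']
      exact (hk.smul hv).const_smul (deriv m θ)
    -- identify and conclude
    have heq : (fun z => fderiv ℂ f z ei)
        =ᶠ[nhds c] fun z => (2 * Real.pi * I : ℂ)⁻¹ •
          ∫ θ in (0:ℝ)..2 * Real.pi, Hi z θ := by
      filter_upwards [isOpen_ball.mem_nhds hcballε] with z hz
      rw [hrep z hz]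
      congr 1
      have : (∮ lam in C(c i, ρ), ((lam - z i) ^ 2)⁻¹ • f (Function.update z i lam))
          = ∫ θ in (0:ℝ)..2 * Real.pi,
            deriv m θ • (((m θ - z i) ^ 2)⁻¹ • f (Function.update z i (m θ))) := rfl
      rw [this]
      simp only [hupdt, hHi]
    have hdiff2 : DifferentiableAt ℂ
        (fun z => (2 * Real.pi * I : ℂ)⁻¹ • ∫ θ in (0:ℝ)..2 * Real.pi, Hi z θ) c :=
      (key.const_smul _).differentiableAt
    exact hdiff2.congr_of_eventuallyEq heq
  -- assemble the full derivative from the partials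
  have hA : DifferentiableAt ℂ (fun z => fun j : Fin n => fderiv ℂ f z (Pi.single j 1)) c := by
    rw [differentiableAt_pi]
    exact fun j => hpartial j
  set A : (Fin n → F) →L[ℂ] (E →L[ℂ] F) :=
    ∑ j : Fin n, (ContinuousLinearMap.smulRightL ℂ E F
      (ContinuousLinearMap.proj j)).comp (ContinuousLinearMap.proj j) with hAdef
  have hAeq : ∀ T : E →L[ℂ] F, A (fun j => T (Pi.single j 1)) = T := by
    intro T
    ext v
    rw [hAdef]
    have hsRL : ∀ (cc : E →L[ℂ] ℂ) (x : F),
        ContinuousLinearMap.smulRightL ℂ E F cc x = cc.smulRight x := fun _ _ => rfl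
    simp only [ContinuousLinearMap.sum_apply, ContinuousLinearMap.coe_comp',
      Function.comp_apply, ContinuousLinearMap.proj_apply, hsRL,
      ContinuousLinearMap.smulRight_apply]
    calc ∑ j : Fin n, v j • T (Pi.single j 1)
        = ∑ j : Fin n, T (v j • (Pi.single j 1 : Fin n → ℂ)) := by
          simp [_root_.map_smul]
      _ = T (∑ j : Fin n, v j • (Pi.single j 1 : Fin n → ℂ)) := (map_sum T _ _).symm
      _ = T v := by
          congr 1
          funext j
          rw [Finset.sum_apply]
          simp [Pi.single_apply]
  have hfd_eq : (fderiv ℂ f) = fun z => A (fun j => fderiv ℂ f z (Pi.single j 1)) := by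
    funext z
    rw [hAeq]
  rw [hfd_eq]
  exact A.differentiableAt.comp c hA

/-- A holomorphic function on an open subset of `ℂⁿ` is `C^k` for every `k`. -/
lemma contDiffOn_of_differentiableOn_complex :
    ∀ (k : ℕ) {F : Type} [NormedAddCommGroup F] [NormedSpace ℂ F] [CompleteSpace F]
      [SecondCountableTopology F] {s : Set (Fin n → ℂ)}, IsOpen s →
      ∀ {f : (Fin n → ℂ) → F}, DifferentiableOn ℂ f s → ContDiffOn ℂ k f s := by
  intro k
  induction k with
  | zero =>
    intro F _ _ _ _ s hs f hf
    simpa [contDiffOn_zero] using hf.continuousOn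
  | succ k ih =>
    intro F _ _ _ _ s hs f hf
    have hcast : ((k + 1 : ℕ) : WithTop ℕ∞) = (k : WithTop ℕ∞) + 1 := by
      norm_cast
    rw [hcast, contDiffOn_succ_iff_fderiv_of_isOpen hs]
    refine ⟨hf, ?_, ?_⟩
    · intro h
      exact absurd h (by simp)
    · exact ih hs (fun c hc =>
        (differentiableAt_fderiv_of_differentiableOn hs hf hc).differentiableWithinAt)

end MultiVar

/-- Lemma 4.6: if all derivatives of order ≤ p of a holomorphic `f` vanish at `x ∈ ℂⁿ`
and all derivatives of order ≤ q of a holomorphic `g` vanish at `y ∈ ℂᵐ`, then all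
derivatives of order ≤ p+q+1 of `(z,w) ↦ f(z)·g(w)` vanish at `(x,y)`. -/
theorem stmt13 (n m p q : ℕ) (f : (Fin n → ℂ) → ℂ) (g : (Fin m → ℂ) → ℂ)
    (x : Fin n → ℂ) (y : Fin m → ℂ)
    (U : Set (Fin n → ℂ)) (V : Set (Fin m → ℂ))
    (hU : IsOpen U) (hx : x ∈ U) (hf : DifferentiableOn ℂ f U)
    (hV : IsOpen V) (hy : y ∈ V) (hg : DifferentiableOn ℂ g V)
    (hfp : ∀ k ≤ p, iteratedFDeriv ℂ k f x = 0)
    (hgq : ∀ k ≤ q, iteratedFDeriv ℂ k g y = 0) :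
    ∀ k ≤ p + q + 1,
      iteratedFDeriv ℂ k
        (fun zw : (Fin n → ℂ) × (Fin m → ℂ) => f zw.1 * g zw.2) (x, y) = 0 := by
  intro k hk
  set N : ℕ := p + q + 1 with hN
  set W : Set ((Fin n → ℂ) × (Fin m → ℂ)) := U ×ˢ V with hW
  have hWopen : IsOpen W := hU.prod hV
  have hxyW : (x, y) ∈ W := ⟨hx, hy⟩
  have hfC : ContDiffOn ℂ N f U := contDiffOn_of_differentiableOn_complex N hU hf
  have hgC : ContDiffOn ℂ N g V := contDiffOn_of_differentiableOn_complex N hV hg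
  set F1 : (Fin n → ℂ) × (Fin m → ℂ) → ℂ := fun zw => f zw.1 with hF1
  set G1 : (Fin n → ℂ) × (Fin m → ℂ) → ℂ := fun zw => g zw.2 with hG1
  have hF1C : ContDiffOn ℂ N F1 W :=
    hfC.comp contDiff_fst.contDiffOn (fun zw hzw => hzw.1)
  have hG1C : ContDiffOn ℂ N G1 W :=
    hgC.comp contDiff_snd.contDiffOn (fun zw hzw => hzw.2)
  -- vanishing of the iterated derivatives of `F1` at `(x,y)`
  have hF1v : ∀ i ≤ p, iteratedFDerivWithin ℂ i F1 W (x, y) = 0 := by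
    intro i hi
    have hiN : (i : WithTop ℕ∞) ≤ (N : ℕ) := by exact_mod_cast (show i ≤ N by omega)
    have hpre : (ContinuousLinearMap.fst ℂ (Fin n → ℂ) (Fin m → ℂ)) ⁻¹' U
        = U ×ˢ (Set.univ : Set (Fin m → ℂ)) := by
      ext zw; simp
    have hUD : UniqueDiffOn ℂ
        ((ContinuousLinearMap.fst ℂ (Fin n → ℂ) (Fin m → ℂ)) ⁻¹' U) := by
      rw [hpre]; exact (hU.prod isOpen_univ).uniqueDiffOn
    have h1 := ContinuousLinearMap.iteratedFDerivWithin_comp_right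
      (f := f) (ContinuousLinearMap.fst ℂ (Fin n → ℂ) (Fin m → ℂ)) hfC hU.uniqueDiffOn
      hUD (x := (x, y)) hx hiN
    rw [show (ContinuousLinearMap.fst ℂ (Fin n → ℂ) (Fin m → ℂ)) (x, y) = x from rfl] at h1
    have hzero : iteratedFDerivWithin ℂ i f U x = 0 := by
      rw [iteratedFDerivWithin_of_isOpen i hU hx]
      exact hfp i hi
    rw [hzero] at h1
    have h2 : ((0 : ContinuousMultilinearMap ℂ (fun _ : Fin i => (Fin n → ℂ)) ℂ)
        |>.compContinuousLinearMap
          fun _ => ContinuousLinearMap.fst ℂ (Fin n → ℂ) (Fin m → ℂ)) = 0 := by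
      ext v; simp
    rw [h2] at h1
    have h3 : iteratedFDerivWithin ℂ i F1 W (x, y) = iteratedFDeriv ℂ i F1 (x, y) :=
      iteratedFDerivWithin_of_isOpen i hWopen hxyW
    have h4 : iteratedFDeriv ℂ i F1 (x, y)
        = iteratedFDerivWithin ℂ i F1 (U ×ˢ (Set.univ : Set (Fin m → ℂ))) (x, y) :=
      (iteratedFDerivWithin_of_isOpen i (hU.prod isOpen_univ) (show (x, y) ∈ U ×ˢ (Set.univ : Set (Fin m → ℂ)) from ⟨hx, Set.mem_univ y⟩)).symm
    rw [h3, h4, ← hpre]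
    exact h1
  have hG1v : ∀ i ≤ q, iteratedFDerivWithin ℂ i G1 W (x, y) = 0 := by
    intro i hi
    have hiN : (i : WithTop ℕ∞) ≤ (N : ℕ) := by exact_mod_cast (show i ≤ N by omega)
    have hpre : (ContinuousLinearMap.snd ℂ (Fin n → ℂ) (Fin m → ℂ)) ⁻¹' V
        = (Set.univ : Set (Fin n → ℂ)) ×ˢ V := by
      ext zw; simp
    have hUD : UniqueDiffOn ℂ
        ((ContinuousLinearMap.snd ℂ (Fin n → ℂ) (Fin m → ℂ)) ⁻¹' V) := by
      rw [hpre]; exact (isOpen_univ.prod hV).uniqueDiffOn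
    have h1 := ContinuousLinearMap.iteratedFDerivWithin_comp_right
      (f := g) (ContinuousLinearMap.snd ℂ (Fin n → ℂ) (Fin m → ℂ)) hgC hV.uniqueDiffOn
      hUD (x := (x, y)) hy hiN
    rw [show (ContinuousLinearMap.snd ℂ (Fin n → ℂ) (Fin m → ℂ)) (x, y) = y from rfl] at h1
    have hzero : iteratedFDerivWithin ℂ i g V y = 0 := by
      rw [iteratedFDerivWithin_of_isOpen i hV hy]
      exact hgq i hi
    rw [hzero] at h1
    have h2 : ((0 : ContinuousMultilinearMap ℂ (fun _ : Fin i => (Fin m → ℂ)) ℂ)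
        |>.compContinuousLinearMap
          fun _ => ContinuousLinearMap.snd ℂ (Fin n → ℂ) (Fin m → ℂ)) = 0 := by
      ext v; simp
    rw [h2] at h1
    have h3 : iteratedFDerivWithin ℂ i G1 W (x, y) = iteratedFDeriv ℂ i G1 (x, y) :=
      iteratedFDerivWithin_of_isOpen i hWopen hxyW
    have h4 : iteratedFDeriv ℂ i G1 (x, y)
        = iteratedFDerivWithin ℂ i G1 ((Set.univ : Set (Fin n → ℂ)) ×ˢ V) (x, y) :=
      (iteratedFDerivWithin_of_isOpen i (isOpen_univ.prod hV) (show (x, y) ∈ (Set.univ : Set (Fin n → ℂ)) ×ˢ V from ⟨Set.mem_univ x, hy⟩)).symm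
    rw [h3, h4, ← hpre]
    exact h1
  -- Leibniz estimate
  have hkN : (k : WithTop ℕ∞) ≤ (N : ℕ) := by exact_mod_cast hk
  have hbound := norm_iteratedFDerivWithin_mul_le (𝕜 := ℂ)
    hF1C hG1C hWopen.uniqueDiffOn hxyW hkN
  have hsum : (∑ i ∈ Finset.range (k + 1), (k.choose i : ℝ) *
      ‖iteratedFDerivWithin ℂ i F1 W (x, y)‖ *
      ‖iteratedFDerivWithin ℂ (k - i) G1 W (x, y)‖) = 0 := by
    apply Finset.sum_eq_zero
    intro i hi
    rcases le_or_gt i p with h | h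
    · rw [hF1v i h]; simp
    · have hq : k - i ≤ q := by omega
      rw [hG1v _ hq]; simp
  have hnorm0 : ‖iteratedFDerivWithin ℂ k (fun zw => F1 zw * G1 zw) W (x, y)‖ = 0 :=
    le_antisymm (hsum ▸ hbound) (norm_nonneg _)
  have hzero : iteratedFDerivWithin ℂ k
      (fun zw : (Fin n → ℂ) × (Fin m → ℂ) => f zw.1 * g zw.2) W (x, y) = 0 :=
    norm_eq_zero.mp hnorm0
  rw [← iteratedFDerivWithin_of_isOpen k hWopen hxyW]
  exact hzero
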